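/- For every odd integer m > 1, the finite sum identity sum_{n=0}^{(m+1)/2} [4n-1] (q^{-1};q^2)_n^4 / (q^2;q^2)_n^4 · q^{4n} = -((1+q)[m]^4[m+1][m+2] + q^{m+1}[m]^4) / (q [m+1]^4 (-q;q)_{(m-1)/2}^8) · (qbinom(m-1, (m-1)/2))^4 holds in ℚ(q). -/

import Mathlib

open RatFunc

noncomputable def q : RatFunc ℚ := RatFunc.X

/-- q-shifted factorial `(a;b)_m = ∏_{j=0}^{m-1} (1 - a b^j)`. -/
noncomputable def qpoch (a b : RatFunc ℚ) (m : ℕ) : RatFunc ℚ :=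
  ∏ j ∈ Finset.range m, (1 - a * b ^ j)

/-- q-integer `[m] = (1-q^m)/(1-q)` for an arbitrary integer `m`. -/
noncomputable def qintZ (m : ℤ) : RatFunc ℚ := (1 - q ^ m) / (1 - q)

/-- q-integer `[m] = 1 + q + ⋯ + q^{m-1}`. -/
noncomputable def qint (m : ℕ) : RatFunc ℚ := ∑ i ∈ Finset.range m, q ^ i

/-- q-binomial coefficient `(q;q)_n / ((q;q)_k (q;q)_{n-k})`. -/
noncomputable def qbinom (n k : ℕ) : RatFunc ℚ :=
  qpoch q q n / (qpoch q q k * qpoch q q (n - k))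

lemma hq0 : q ≠ 0 := RatFunc.X_ne_zero

lemma one_sub_q_pow_ne_zero (n : ℕ) (hn : n ≠ 0) : (1 : RatFunc ℚ) - q ^ n ≠ 0 := by
  intro h
  have h1 : (q : RatFunc ℚ) ^ n = 1 := by linear_combination -h
  have h2 : (algebraMap (Polynomial ℚ) (RatFunc ℚ)) (Polynomial.X ^ n) =
      (algebraMap (Polynomial ℚ) (RatFunc ℚ)) 1 := by
    simpa [q, map_pow] using h1
  have h3 : (Polynomial.X ^ n : Polynomial ℚ) = 1 :=
    IsFractionRing.injective (Polynomial ℚ) (RatFunc ℚ) h2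
  have := congrArg (Polynomial.eval 0) h3
  simp [Polynomial.eval_pow, zero_pow hn] at this

lemma one_add_q_pow_ne_zero (n : ℕ) : (1 : RatFunc ℚ) + q ^ n ≠ 0 := by
  rcases Nat.eq_zero_or_pos n with rfl | hn
  · intro h
    have h2 : (algebraMap (Polynomial ℚ) (RatFunc ℚ)) 2 =
        (algebraMap (Polynomial ℚ) (RatFunc ℚ)) 0 := by
      rw [map_ofNat, map_zero]
      linear_combination h
    have h3 : (2 : Polynomial ℚ) = 0 :=
      IsFractionRing.injective (Polynomial ℚ) (RatFunc ℚ) h2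
    norm_num at h3
  intro h
  have h1 : (q : RatFunc ℚ) ^ n = -1 := by linear_combination h
  have h2 : (algebraMap (Polynomial ℚ) (RatFunc ℚ)) (Polynomial.X ^ n) =
      (algebraMap (Polynomial ℚ) (RatFunc ℚ)) (-1) := by
    simpa [q, map_pow] using h1
  have h3 : (Polynomial.X ^ n : Polynomial ℚ) = -1 :=
    IsFractionRing.injective (Polynomial ℚ) (RatFunc ℚ) h2
  have := congrArg (Polynomial.eval 0) h3
  simp [Polynomial.eval_pow, zero_pow hn.ne'] at this

lemma one_sub_q_ne_zero : (1 : RatFunc ℚ) - q ≠ 0 := by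
  simpa using one_sub_q_pow_ne_zero 1 one_ne_zero

lemma qpoch_succ (a b : RatFunc ℚ) (m : ℕ) :
    qpoch a b (m + 1) = qpoch a b m * (1 - a * b ^ m) := Finset.prod_range_succ _ m

lemma P_ne_zero (k : ℕ) : qpoch q (q ^ 2) k ≠ 0 := by
  refine Finset.prod_ne_zero_iff.2 fun j _ => ?_
  have : q * (q ^ 2) ^ j = q ^ (2 * j + 1) := by ring
  rw [this]
  exact one_sub_q_pow_ne_zero _ (by omega)

lemma R_ne_zero (k : ℕ) : qpoch (q ^ 2) (q ^ 2) k ≠ 0 := by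
  refine Finset.prod_ne_zero_iff.2 fun j _ => ?_
  have : q ^ 2 * (q ^ 2) ^ j = q ^ (2 * j + 2) := by ring
  rw [this]
  exact one_sub_q_pow_ne_zero _ (by omega)

lemma Q_ne_zero (k : ℕ) : qpoch q q k ≠ 0 := by
  refine Finset.prod_ne_zero_iff.2 fun j _ => ?_
  have : q * q ^ j = q ^ (j + 1) := by ring
  rw [this]
  exact one_sub_q_pow_ne_zero _ (by omega)

lemma N_ne_zero (k : ℕ) : qpoch (-q) q k ≠ 0 := by
  refine Finset.prod_ne_zero_iff.2 fun j _ => ?_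
  have : (1 : RatFunc ℚ) - -q * q ^ j = 1 + q ^ (j + 1) := by ring
  rw [this]
  exact one_add_q_pow_ne_zero _

lemma A_eq (n : ℕ) : qpoch q⁻¹ (q ^ 2) (n + 1) = (1 - q⁻¹) * qpoch q (q ^ 2) n := by
  induction n with
  | zero => simp [qpoch]
  | succ n ih =>
      rw [qpoch_succ, ih, qpoch_succ q (q ^ 2) n]
      have : q⁻¹ * (q ^ 2) ^ (n + 1) = q * (q ^ 2) ^ n := by
        calc q⁻¹ * (q ^ 2) ^ (n + 1) = (q⁻¹ * q) * (q * (q ^ 2) ^ n) := by ring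
          _ = q * (q ^ 2) ^ n := by rw [inv_mul_cancel₀ hq0]; ring
      rw [this]
      ring

lemma split1 (k : ℕ) : qpoch q q (2 * k) = qpoch q (q ^ 2) k * qpoch (q ^ 2) (q ^ 2) k := by
  induction k with
  | zero => simp [qpoch]
  | succ k ih =>
      have h2 : 2 * (k + 1) = (2 * k + 1) + 1 := by ring
      rw [h2, qpoch_succ, qpoch_succ, ih, qpoch_succ q (q ^ 2) k,
        qpoch_succ (q ^ 2) (q ^ 2) k]
      have e1 : q * q ^ (2 * k) = q * (q ^ 2) ^ k := by ring
      have e2 : q * q ^ (2 * k + 1) = q ^ 2 * (q ^ 2) ^ k := by ring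
      rw [e1, e2]
      ring

lemma split2 (k : ℕ) : qpoch (q ^ 2) (q ^ 2) k = qpoch q q k * qpoch (-q) q k := by
  induction k with
  | zero => simp [qpoch]
  | succ k ih =>
      rw [qpoch_succ, qpoch_succ, qpoch_succ, ih]
      have : (1 : RatFunc ℚ) - q ^ 2 * (q ^ 2) ^ k =
          (1 - q * q ^ k) * (1 - -q * q ^ k) := by ring
      rw [this]
      ring

lemma qint_eq (n : ℕ) : qint n = (1 - q ^ n) / (1 - q) := by
  have hq1 : q ≠ 1 := by
    intro h
    exact one_sub_q_ne_zero (by rw [h]; ring)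
  rw [qint, geom_sum_eq hq1]
  rw [div_eq_div_iff (by intro h; exact hq1 (by linear_combination h)) one_sub_q_ne_zero]
  ring

noncomputable def E (N : ℕ) : RatFunc ℚ :=
  -(((1 + q) * (1 - q ^ (2*N+1)) ^ 4 * (1 - q ^ (2*N+2)) * (1 - q ^ (2*N+3))
      + q ^ (2*N+2) * (1 - q ^ (2*N+1)) ^ 4 * (1 - q) ^ 2)
    / ((1 - q) ^ 2 * q * (1 - q ^ (2*N+2)) ^ 4))
  * (qpoch q (q ^ 2) N / qpoch (q ^ 2) (q ^ 2) N) ^ 4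

set_option maxHeartbeats 2000000 in
lemma one_sub_inv : (1 : RatFunc ℚ) - q⁻¹ = -(1 - q) / q := by
  field_simp [hq0]
  ring

set_option maxHeartbeats 2000000 in
lemma key (N : ℕ) :
    ∑ n ∈ Finset.range (N + 2),
        qintZ (4 * n - 1) * qpoch q⁻¹ (q ^ 2) n ^ 4 / qpoch (q ^ 2) (q ^ 2) n ^ 4 * q ^ (4 * n)
      = E N := by
  induction N with
  | zero =>
      rw [Finset.sum_range_succ, Finset.sum_range_one]
      have e0 : qintZ (4 * ((0 : ℕ) : ℤ) - 1) = (1 - q⁻¹) / (1 - q) := by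
        rw [qintZ]
        norm_num
      have e1 : qintZ (4 * ((1 : ℕ) : ℤ) - 1) = (1 - q ^ (3 : ℕ)) / (1 - q) := by
        rw [qintZ, show (4 * ((1 : ℕ) : ℤ) - 1) = ((3 : ℕ) : ℤ) by norm_num, zpow_natCast]
      rw [e0, e1]
      norm_num [qpoch, E, Finset.prod_range_one, Finset.prod_range_zero]
      rw [one_sub_inv]
      have hq := hq0
      have h1 := one_sub_q_ne_zero
      have h2 : (1 : RatFunc ℚ) - q ^ 2 ≠ 0 := one_sub_q_pow_ne_zero 2 (by omega)
      have h3 : (1 : RatFunc ℚ) - q ^ 3 ≠ 0 := one_sub_q_pow_ne_zero 3 (by omega)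
      set A := (1 : RatFunc ℚ) - q with hA
      set B := (1 : RatFunc ℚ) - q ^ 2 with hB
      set C := (1 : RatFunc ℚ) - q ^ 3 with hC
      clear_value A B C
      field_simp
      rw [hA, hB, hC]
      ring
  | succ N ih =>
      rw [Finset.sum_range_succ, ih]
      have eZ : qintZ (4 * ((N + 2 : ℕ) : ℤ) - 1) = (1 - q ^ (4 * N + 7)) / (1 - q) := by
        rw [qintZ, show (4 * ((N + 2 : ℕ) : ℤ) - 1) = ((4 * N + 7 : ℕ) : ℤ) by push_cast; ring,
          zpow_natCast]
      simp only [E]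
      rw [eZ, A_eq, qpoch_succ q (q ^ 2) N, qpoch_succ (q ^ 2) (q ^ 2) (N + 1),
        qpoch_succ (q ^ 2) (q ^ 2) N]
      have e1 : q * (q ^ 2) ^ N = q ^ (2 * N + 1) := by ring
      have e2 : q ^ 2 * (q ^ 2) ^ N = q ^ (2 * N + 2) := by ring
      have e3 : q ^ 2 * (q ^ 2) ^ (N + 1) = q ^ (2 * N + 4) := by ring
      rw [e1, e2, e3]
      have e4 : 2 * (N + 1) + 1 = 2 * N + 3 := by ring
      have e5 : 2 * (N + 1) + 2 = 2 * N + 4 := by ring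
      have e6 : 2 * (N + 1) + 3 = 2 * N + 5 := by ring
      rw [e4, e5, e6, one_sub_inv]
      have hq := hq0
      have h0 := one_sub_q_ne_zero
      have h1 := one_sub_q_pow_ne_zero (2 * N + 1) (by omega)
      have h2 := one_sub_q_pow_ne_zero (2 * N + 2) (by omega)
      have h3 := one_sub_q_pow_ne_zero (2 * N + 3) (by omega)
      have h4 := one_sub_q_pow_ne_zero (2 * N + 4) (by omega)
      have h5 := one_sub_q_pow_ne_zero (2 * N + 5) (by omega)
      have hP := P_ne_zero N
      have hR := R_ne_zero N
      set A := (1 : RatFunc ℚ) - q with hA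
      set U1 := (1 : RatFunc ℚ) - q ^ (2 * N + 1) with hU1
      set U2 := (1 : RatFunc ℚ) - q ^ (2 * N + 2) with hU2
      set U3 := (1 : RatFunc ℚ) - q ^ (2 * N + 3) with hU3
      set U4 := (1 : RatFunc ℚ) - q ^ (2 * N + 4) with hU4
      set U5 := (1 : RatFunc ℚ) - q ^ (2 * N + 5) with hU5
      set P := qpoch q (q ^ 2) N with hP2
      set R := qpoch (q ^ 2) (q ^ 2) N with hR2
      clear_value A U1 U2 U3 U4 U5 P R
      field_simp
      rw [hA, hU2, hU3, hU4, hU5]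
      ring

theorem sum_identity_half (m : ℕ) (hm : Odd m) (hm1 : 1 < m) :
    ∑ n ∈ Finset.range ((m + 1) / 2 + 1),
        qintZ (4 * n - 1) * qpoch q⁻¹ (q ^ 2) n ^ 4 / qpoch (q ^ 2) (q ^ 2) n ^ 4 * q ^ (4 * n)
      = -(((1 + q) * qint m ^ 4 * qint (m + 1) * qint (m + 2) + q ^ (m + 1) * qint m ^ 4) /
          (q * qint (m + 1) ^ 4 * qpoch (-q) q ((m - 1) / 2) ^ 8)) *
          qbinom (m - 1) ((m - 1) / 2) ^ 4 := by
  obtain ⟨k, hk⟩ := hm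
  subst hk
  have e1 : (2 * k + 1 + 1) / 2 + 1 = k + 2 := by omega
  have e2 : (2 * k + 1 - 1) / 2 = k := by omega
  have e3 : 2 * k + 1 - 1 = 2 * k := by omega
  rw [e1, e2, e3, key k]
  simp only [E, qbinom]
  have e4 : 2 * k - k = k := by omega
  rw [e4, split1, split2, qint_eq, qint_eq, qint_eq]
  have e5 : 2 * k + 1 + 1 = 2 * k + 2 := by omega
  have e6 : 2 * k + 1 + 2 = 2 * k + 3 := by omega
  rw [e5, e6]
  have hq := hq0
  have h0 := one_sub_q_ne_zero
  have h1 := one_sub_q_pow_ne_zero (2 * k + 1) (by omega)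
  have h2 := one_sub_q_pow_ne_zero (2 * k + 2) (by omega)
  have h3 := one_sub_q_pow_ne_zero (2 * k + 3) (by omega)
  have hP := P_ne_zero k
  have hQ := Q_ne_zero k
  have hN := N_ne_zero k
  set A := (1 : RatFunc ℚ) - q with hA
  set U1 := (1 : RatFunc ℚ) - q ^ (2 * k + 1) with hU1
  set U2 := (1 : RatFunc ℚ) - q ^ (2 * k + 2) with hU2
  set U3 := (1 : RatFunc ℚ) - q ^ (2 * k + 3) with hU3
  set P := qpoch q (q ^ 2) k with hP2
  set Q := qpoch q q k with hQ2
  set Nn := qpoch (-q) q k with hN2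
  clear_value A U1 U2 U3 P Q Nn
  field_simp
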